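/- Let (W, ⊑) be a WQO partitioned as W = W_A ∪ W_B, and let Pre, Pre-tilde be the predecessor and dual-predecessor operators of a transition relation → on W satisfying Pre(X) = Pre(C↑(X)). If the transition relation strictly alternates between W_A and W_B (every step from W_A leads into W_B and vice versa), then the least fixpoint of F(X) = V ∪ (W_A ∩ Pre(X)) ∪ (W_B ∩ Pre-tilde(X)) equals the least fixpoint of F'(X) = V ∪ (W_A ∩ Pre(C↑(X))) ∪ (W_B ∩ Pre-tilde(V ∪ Pre(C↑(X)))). -/
import Mathlib


variable {W : Type*} [Preorder W]

def Cup (V : Set W) : Set W := {w | ∃ v ∈ V, v ≤ w}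
def Pre (step : W → W → Prop) (V : Set W) : Set W := {σ | ∃ ρ ∈ V, step σ ρ}
def PreTilde (step : W → W → Prop) (V : Set W) : Set W := (Pre step Vᶜ)ᶜ

/-- Unfolding the reachability-game fixpoint: under strict alternation between
`W_A` and `W_B`, and compatibility `Pre(X) = Pre(C↑(X))`, the least fixpoint of
`F(X) = V ∪ (W_A ∩ Pre(X)) ∪ (W_B ∩ Pre-tilde(X))` equals the least fixpoint of
`F'(X) = V ∪ (W_A ∩ Pre(C↑(X))) ∪ (W_B ∩ Pre-tilde(V ∪ Pre(C↑(X))))`. -/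
theorem reachability_game_unfolding (step : W → W → Prop)
    (WA WB : Set W) (hpart : WA ∪ WB = Set.univ) (hdisj : Disjoint WA WB)
    (hAB : ∀ σ ρ, σ ∈ WA → step σ ρ → ρ ∈ WB)
    (hBA : ∀ σ ρ, σ ∈ WB → step σ ρ → ρ ∈ WA)
    (hcomp : ∀ X : Set W, Pre step X = Pre step (Cup X))
    (V : Set W)
    (F F' : Set W → Set W)
    (hF : ∀ X, F X = V ∪ (WA ∩ Pre step X) ∪ (WB ∩ PreTilde step X))
    (hF' : ∀ X, F' X = V ∪ (WA ∩ Pre step (Cup X)) ∪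
      (WB ∩ PreTilde step (V ∪ Pre step (Cup X))))
    (hFmono : Monotone F) (hF'mono : Monotone F') :
    OrderHom.lfp ⟨F, hFmono⟩ = OrderHom.lfp ⟨F', hF'mono⟩ := by
  set L := OrderHom.lfp (⟨F, hFmono⟩ : Set W →o Set W) with hL
  set L' := OrderHom.lfp (⟨F', hF'mono⟩ : Set W →o Set W) with hL'
  have hLfix : F L = L := OrderHom.map_lfp (⟨F, hFmono⟩ : Set W →o Set W)
  have hL'fix : F' L' = L' := OrderHom.map_lfp (⟨F', hF'mono⟩ : Set W →o Set W)
  rw [hF] at hLfix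
  rw [hF'] at hL'fix
  apply le_antisymm
  · -- lfp F ≤ lfp F' : show F L' ⊆ L'
    apply OrderHom.lfp_le
    show F L' ⊆ L'
    rw [hF]
    intro σ hσ
    rcases hσ with (hV | hA) | hB
    · exact hL'fix ▸ Or.inl (Or.inl hV)
    · refine hL'fix ▸ Or.inl (Or.inr ⟨hA.1, ?_⟩)
      obtain ⟨ρ, hρ, hs⟩ := hA.2
      exact ⟨ρ, ⟨ρ, hρ, le_refl ρ⟩, hs⟩
    · refine hL'fix ▸ Or.inr ⟨hB.1, fun h => ?_⟩
      obtain ⟨ρ, hρ, hs⟩ := h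
      have hρA : ρ ∈ WA := hBA σ ρ hB.1 hs
      have hρL : ρ ∈ L' := by
        by_contra hc
        exact hB.2 ⟨ρ, hc, hs⟩
      have := hL'fix ▸ hρL
      rcases this with (hV | hA') | hB'
      · exact hρ (Or.inl hV)
      · exact hρ (Or.inr hA'.2)
      · exact hdisj.le_bot ⟨hρA, hB'.1⟩
  · -- lfp F' ≤ lfp F : show F' L ⊆ L
    apply OrderHom.lfp_le
    show F' L ⊆ L
    rw [hF', ← hcomp]
    intro σ hσ
    rcases hσ with (hV | hA) | hB
    · exact hLfix ▸ Or.inl (Or.inl hV)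
    · exact hLfix ▸ Or.inl (Or.inr hA)
    · refine hLfix ▸ Or.inr ⟨hB.1, fun h => ?_⟩
      obtain ⟨ρ, hρ, hs⟩ := h
      have hρA : ρ ∈ WA := hBA σ ρ hB.1 hs
      have hρ' : ρ ∈ V ∪ Pre step L := by
        by_contra hc
        exact hB.2 ⟨ρ, hc, hs⟩
      have : ρ ∈ L := by
        rcases hρ' with hV' | hP
        · exact hLfix ▸ Or.inl (Or.inl hV')
        · exact hLfix ▸ Or.inl (Or.inr ⟨hρA, hP⟩)
      exact hρ this
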